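/- Let α = 1/2 and β = 0. For t > 0 set R(t) := I₀′(t/4)/I₀(t/4) (a well-defined real number since I₀(x) ≥ 1 > 0 for real x), and with s = −it define u₁(t) := (s/16)·(i + R(t))², u₂(t) := −(s/16)·(i − R(t))², v₁(t) := (i − R(t))/(i + R(t)), v₂(t) := (i + R(t))/(i − R(t)) (well-defined since i ± R(t) ≠ 0). Then (u₁, v₁, u₂, v₂) is a solution of the coupled Painlevé V system with parameters (1/2, 0) on the negative imaginary ray, i.e. the system holds at s = −it for all t > 0 with d/ds interpreted as i·d/dt, and its Hamiltonian satisfies H = s/16 + (i/4)·R(t) at s = −it, that is, H(t) = −it/16 + (i/4)·I₀′(t/4)/I₀(t/4) for all t > 0. -/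

import Mathlib

open Complex Filter Topology MeasureTheory

/-- Right-hand side of the `u₁`-equation of the coupled Painlevé V system in
dimension four: `s·u₁′ = (s/2)u₁ − u₁²(v₁−1)(3v₁−1) − u₁u₂(v₂−1)(2v₁+v₂−1)
+ 2(α+β)u₁v₁ − 2βu₁`. -/
noncomputable def cpvRHSu₁ (α β s u₁ u₂ v₁ v₂ : ℂ) : ℂ :=
  (s / 2) * u₁ - u₁ ^ 2 * (v₁ - 1) * (3 * v₁ - 1)
    - u₁ * u₂ * (v₂ - 1) * (2 * v₁ + v₂ - 1) + 2 * (α + β) * u₁ * v₁ - 2 * β * u₁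

/-- Right-hand side of the `u₂`-equation of the coupled Painlevé V system. -/
noncomputable def cpvRHSu₂ (α β s u₁ u₂ v₁ v₂ : ℂ) : ℂ :=
  -(s / 2) * u₂ - u₂ ^ 2 * (v₂ - 1) * (3 * v₂ - 1)
    - u₁ * u₂ * (v₁ - 1) * (v₁ + 2 * v₂ - 1) + 2 * (α + β) * u₂ * v₂ - 2 * β * u₂

/-- Right-hand side of the `v₁`-equation of the coupled Painlevé V system. -/
noncomputable def cpvRHSv₁ (α β s u₁ u₂ v₁ v₂ : ℂ) : ℂ :=
  -(s / 2) * v₁ + 2 * u₁ * v₁ * (v₁ - 1) ^ 2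
    + u₂ * (v₁ + v₂) * (v₁ - 1) * (v₂ - 1) - α * (v₁ ^ 2 - 1) - β * (v₁ - 1) ^ 2

/-- Right-hand side of the `v₂`-equation of the coupled Painlevé V system. -/
noncomputable def cpvRHSv₂ (α β s u₁ u₂ v₁ v₂ : ℂ) : ℂ :=
  (s / 2) * v₂ + 2 * u₂ * v₂ * (v₂ - 1) ^ 2
    + u₁ * (v₁ + v₂) * (v₁ - 1) * (v₂ - 1) - α * (v₂ ^ 2 - 1) - β * (v₂ - 1) ^ 2

/-- `s·H` for the coupled Painlevé V system: `s·H = u₁²v₁(v₁−1)² + u₂²v₂(v₂−1)²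
− (s/2)(u₁v₁ − u₂v₂) − α(u₁(v₁²−1) + u₂(v₂²−1)) − β(u₁(v₁−1)² + u₂(v₂−1)²)
+ u₁u₂(v₁+v₂)(v₁−1)(v₂−1)`. -/
noncomputable def cpvSH (α β s u₁ u₂ v₁ v₂ : ℂ) : ℂ :=
  u₁ ^ 2 * v₁ * (v₁ - 1) ^ 2 + u₂ ^ 2 * v₂ * (v₂ - 1) ^ 2
    - (s / 2) * (u₁ * v₁ - u₂ * v₂)
    - α * (u₁ * (v₁ ^ 2 - 1) + u₂ * (v₂ ^ 2 - 1))
    - β * (u₁ * (v₁ - 1) ^ 2 + u₂ * (v₂ - 1) ^ 2)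
    + u₁ * u₂ * (v₁ + v₂) * (v₁ - 1) * (v₂ - 1)

/-- The Hamiltonian `H` of the coupled Painlevé V system, defined by `s·H = cpvSH`. -/
noncomputable def cpvH (α β s u₁ u₂ v₁ v₂ : ℂ) : ℂ := cpvSH α β s u₁ u₂ v₁ v₂ / s

/-- `(u₁, u₂, v₁, v₂)` is a solution of the coupled Painlevé V system in dimension
four with parameters `(α, β)` on a set `I ⊆ ℝ` of (nonzero) real values of `s`. -/
def IsCPVSolutionOn (α β : ℂ) (I : Set ℝ) (u₁ u₂ v₁ v₂ : ℝ → ℂ) : Prop :=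
  ∀ s ∈ I,
    DifferentiableAt ℝ u₁ s ∧ DifferentiableAt ℝ u₂ s ∧
    DifferentiableAt ℝ v₁ s ∧ DifferentiableAt ℝ v₂ s ∧
    (s : ℂ) * deriv u₁ s = cpvRHSu₁ α β s (u₁ s) (u₂ s) (v₁ s) (v₂ s) ∧
    (s : ℂ) * deriv u₂ s = cpvRHSu₂ α β s (u₁ s) (u₂ s) (v₁ s) (v₂ s) ∧
    (s : ℂ) * deriv v₁ s = cpvRHSv₁ α β s (u₁ s) (u₂ s) (v₁ s) (v₂ s) ∧
    (s : ℂ) * deriv v₂ s = cpvRHSv₂ α β s (u₁ s) (u₂ s) (v₁ s) (v₂ s)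

/-- `(u₁, u₂, v₁, v₂)`, as functions of `t > 0`, form a solution of the coupled
Painlevé V system with parameters `(α, β)` on the negative imaginary ray
`s = −it`, `t > 0`, where `d/ds` is interpreted as `i·d/dt`. -/
def IsCPVSolutionNegIm (α β : ℂ) (u₁ u₂ v₁ v₂ : ℝ → ℂ) : Prop :=
  ∀ t : ℝ, 0 < t →
    DifferentiableAt ℝ u₁ t ∧ DifferentiableAt ℝ u₂ t ∧
    DifferentiableAt ℝ v₁ t ∧ DifferentiableAt ℝ v₂ t ∧
    (-Complex.I * t) * (Complex.I * deriv u₁ t)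
      = cpvRHSu₁ α β (-Complex.I * t) (u₁ t) (u₂ t) (v₁ t) (v₂ t) ∧
    (-Complex.I * t) * (Complex.I * deriv u₂ t)
      = cpvRHSu₂ α β (-Complex.I * t) (u₁ t) (u₂ t) (v₁ t) (v₂ t) ∧
    (-Complex.I * t) * (Complex.I * deriv v₁ t)
      = cpvRHSv₁ α β (-Complex.I * t) (u₁ t) (u₂ t) (v₁ t) (v₂ t) ∧
    (-Complex.I * t) * (Complex.I * deriv v₂ t)
      = cpvRHSv₂ α β (-Complex.I * t) (u₁ t) (u₂ t) (v₁ t) (v₂ t)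

/-- The modified Bessel function of order zero, `I₀(x) = Σ (x²/4)ⁿ/(n!)²`. -/
noncomputable def besselI0 (x : ℝ) : ℝ :=
  ∑' n : ℕ, (x ^ 2 / 4) ^ n / ((Nat.factorial n : ℝ)) ^ 2

/-- `R(t) = I₀′(t/4)/I₀(t/4)`. -/
noncomputable def besselR (t : ℝ) : ℝ := deriv besselI0 (t / 4) / besselI0 (t / 4)

/-- `u₁(t) = (s/16)(i + R(t))²` with `s = −it`. -/
noncomputable def besselu₁ (t : ℝ) : ℂ :=
  ((-Complex.I * t) / 16) * (Complex.I + (besselR t : ℂ)) ^ 2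

/-- `u₂(t) = −(s/16)(i − R(t))²` with `s = −it`. -/
noncomputable def besselu₂ (t : ℝ) : ℂ :=
  -((-Complex.I * t) / 16) * (Complex.I - (besselR t : ℂ)) ^ 2

/-- `v₁(t) = (i − R(t))/(i + R(t))`. -/
noncomputable def besselv₁ (t : ℝ) : ℂ :=
  (Complex.I - (besselR t : ℂ)) / (Complex.I + (besselR t : ℂ))

/-- `v₂(t) = (i + R(t))/(i − R(t))`. -/
noncomputable def besselv₂ (t : ℝ) : ℂ :=
  (Complex.I + (besselR t : ℂ)) / (Complex.I - (besselR t : ℂ))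


section CPVAux
set_option maxHeartbeats 2000000

set_option maxHeartbeats 1000000

/-- Generic power series sum. -/
noncomputable def besselG (c : ℕ → ℝ) (y : ℝ) : ℝ := ∑' n, c n * y ^ n

lemma bessel_summable {c : ℕ → ℝ} (hc : ∀ n, |c n| ≤ 1 / n.factorial) (y : ℝ) :
    Summable fun n => c n * y ^ n := by
  refine Summable.of_norm_bounded (g := fun n => |y| ^ n / n.factorial)
    (Real.summable_pow_div_factorial |y|) fun n => ?_
  rw [norm_mul, norm_pow, Real.norm_eq_abs, Real.norm_eq_abs]
  calc |c n| * |y| ^ n ≤ (1 / n.factorial) * |y| ^ n := by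
        gcongr; exact hc n
    _ = |y| ^ n / n.factorial := by ring

lemma bessel_deriv_bound {c : ℕ → ℝ} (hc : ∀ n, |c n| ≤ 1 / n.factorial) {y x : ℝ}
    (hx : |x| ≤ |y| + 1) (n : ℕ) :
    ‖c n * ((n : ℝ) * x ^ (n - 1))‖ ≤ (2 * (|y| + 1)) ^ n / n.factorial := by
  have h2 : |x| ^ (n - 1) ≤ (|y| + 1) ^ n := by
    calc |x| ^ (n-1) ≤ (|y|+1) ^ (n-1) := pow_le_pow_left₀ (abs_nonneg x) hx _
      _ ≤ (|y|+1) ^ n := pow_le_pow_right₀ (by linarith [abs_nonneg y]) (Nat.sub_le n 1)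
  have h3 : (n : ℝ) ≤ 2 ^ n := by exact_mod_cast Nat.le_of_lt (Nat.lt_two_pow_self (n := n))
  rw [Real.norm_eq_abs, abs_mul, abs_mul, _root_.abs_pow, Nat.abs_cast]
  calc |c n| * ((n:ℝ) * |x| ^ (n-1)) ≤ (1 / n.factorial) * ((2:ℝ)^n * (|y|+1) ^ n) := by
        apply mul_le_mul (hc n) _ (by positivity) (by positivity)
        exact mul_le_mul h3 h2 (by positivity) (by positivity)
    _ = (2 * (|y| + 1)) ^ n / n.factorial := by rw [mul_pow]; ring

lemma bessel_summable_deriv {c : ℕ → ℝ} (hc : ∀ n, |c n| ≤ 1 / n.factorial) (y : ℝ) :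
    Summable fun n => c n * ((n : ℝ) * y ^ (n - 1)) :=
  Summable.of_norm_bounded (g := fun n => (2 * (|y| + 1)) ^ n / n.factorial)
    (Real.summable_pow_div_factorial _)
    (fun n => bessel_deriv_bound hc (by linarith [abs_nonneg y]) n)

lemma bessel_hasDerivAt {c : ℕ → ℝ} (hc : ∀ n, |c n| ≤ 1 / n.factorial) (y : ℝ) :
    HasDerivAt (besselG c) (besselG (fun n => (n + 1 : ℝ) * c (n + 1)) y) y := by
  have key : HasDerivAt (besselG c) (∑' n, c n * ((n : ℝ) * y ^ (n - 1))) y := by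
    refine hasDerivAt_tsum_of_isPreconnected
      (u := fun n => (2 * (|y| + 1)) ^ n / n.factorial)
      (y₀ := y)
      (Real.summable_pow_div_factorial _)
      (isOpen_Ioo (a := -(|y|+1)) (b := |y|+1))
      (isPreconnected_Ioo)
      (g' := fun n x => c n * ((n : ℝ) * x ^ (n - 1)))
      (fun n x _ => (hasDerivAt_pow n x).const_mul (c n))
      (fun n x hx => bessel_deriv_bound hc ?_ n)
      ?_ (bessel_summable hc _) ?_
    · rw [abs_le]; constructor <;> [linarith [hx.1]; linarith [hx.2]]
    · constructor <;> [linarith [neg_abs_le y]; linarith [le_abs_self y]]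
    · constructor <;> [linarith [neg_abs_le y]; linarith [le_abs_self y]]
  convert key using 1
  rw [besselG, Summable.tsum_eq_zero_add (bessel_summable_deriv hc y)]
  rw [show c 0 * ((0:ℕ) * y ^ (0 - 1)) = 0 by push_cast; ring, zero_add]
  refine tsum_congr fun n => ?_
  simp only [Nat.add_sub_cancel]
  push_cast
  ring

lemma bessel_one_le {c : ℕ → ℝ} (hc : ∀ n, |c n| ≤ 1 / n.factorial)
    (hpos : ∀ n, 0 ≤ c n) (h0 : c 0 = 1) {y : ℝ} (hy : 0 ≤ y) : 1 ≤ besselG c y := by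
  have := Summable.le_tsum (bessel_summable hc y) 0 (fun i _ => mul_nonneg (hpos i) (pow_nonneg hy i))
  simpa [h0, besselG] using this
noncomputable def cA (n : ℕ) : ℝ := 1 / (n.factorial : ℝ) ^ 2
noncomputable def cB (n : ℕ) : ℝ := 1 / ((n.factorial : ℝ) * ((n+1).factorial : ℝ))
noncomputable def cC (n : ℕ) : ℝ := 1 / ((n.factorial : ℝ) * ((n+2).factorial : ℝ))

lemma fact_one_le (n : ℕ) : (1:ℝ) ≤ n.factorial := by
  exact_mod_cast Nat.one_le_iff_ne_zero.mpr n.factorial_ne_zero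

lemma cA_nonneg (n : ℕ) : 0 ≤ cA n := by unfold cA; positivity
lemma cB_nonneg (n : ℕ) : 0 ≤ cB n := by unfold cB; positivity
lemma cC_nonneg (n : ℕ) : 0 ≤ cC n := by unfold cC; positivity

lemma cA_bound (n : ℕ) : |cA n| ≤ 1 / n.factorial := by
  rw [_root_.abs_of_nonneg (cA_nonneg n)]; unfold cA
  have h := fact_one_le n
  rw [div_le_div_iff₀ (by positivity) (by positivity)]
  nlinarith

lemma cB_bound (n : ℕ) : |cB n| ≤ 1 / n.factorial := by
  rw [_root_.abs_of_nonneg (cB_nonneg n)]; unfold cB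
  have h := fact_one_le n
  have h2 := fact_one_le (n+1)
  rw [div_le_div_iff₀ (by positivity) (by positivity)]
  nlinarith

lemma cC_bound (n : ℕ) : |cC n| ≤ 1 / n.factorial := by
  rw [_root_.abs_of_nonneg (cC_nonneg n)]; unfold cC
  have h := fact_one_le n
  have h2 := fact_one_le (n+2)
  rw [div_le_div_iff₀ (by positivity) (by positivity)]
  nlinarith

lemma cAB : (fun n : ℕ => (n + 1 : ℝ) * cA (n + 1)) = cB := by
  funext n
  have h := fact_one_le n
  unfold cA cB
  rw [show (n+1).factorial = (n+1) * n.factorial from Nat.factorial_succ n]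
  push_cast
  field_simp

lemma cBC : (fun n : ℕ => (n + 1 : ℝ) * cB (n + 1)) = cC := by
  funext n
  have h := fact_one_le n
  unfold cB cC
  rw [show (n+1).factorial = (n+1) * n.factorial from Nat.factorial_succ n,
    show (n+1+1).factorial = (n+2) * ((n+1) * n.factorial) by
      rw [Nat.factorial_succ, Nat.factorial_succ]]
  push_cast
  field_simp

lemma cCoef (n : ℕ) : cC n + cB (n + 1) = cA (n + 1) := by
  have h := fact_one_le n
  unfold cA cB cC
  rw [show (n+1).factorial = (n+1) * n.factorial from Nat.factorial_succ n,
    show (n+2).factorial = (n+2) * ((n+1) * n.factorial) by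
      rw [show n+2 = n+1+1 from rfl, Nat.factorial_succ, Nat.factorial_succ]]
  push_cast
  have hn : (n:ℝ) + 1 > 0 := by positivity
  have hn2 : (n:ℝ) + 2 > 0 := by positivity
  field_simp
  ring

lemma key_identity (y : ℝ) :
    y * besselG cC y + besselG cB y = besselG cA y := by
  have sC : Summable fun n => cC n * y ^ (n + 1) := by
    refine ((bessel_summable cC_bound y).mul_left y).congr fun n => by ring
  have sB : Summable fun n => cB (n + 1) * y ^ (n + 1) :=
    (summable_nat_add_iff 1).mpr (bessel_summable cB_bound y)
  have h1 : y * besselG cC y = ∑' n, cC n * y ^ (n + 1) := by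
    rw [besselG, ← tsum_mul_left]
    exact tsum_congr fun n => by ring
  have h2 : besselG cB y = cB 0 + ∑' n, cB (n + 1) * y ^ (n + 1) := by
    rw [besselG, Summable.tsum_eq_zero_add (bessel_summable cB_bound y), pow_zero, mul_one]
  have h3 : besselG cA y = cA 0 + ∑' n, cA (n + 1) * y ^ (n + 1) := by
    rw [besselG, Summable.tsum_eq_zero_add (bessel_summable cA_bound y), pow_zero, mul_one]
  rw [h1, h2, h3]
  have h0 : cB 0 = cA 0 := by unfold cA cB; norm_num
  rw [h0, add_left_comm, ← Summable.tsum_add sC sB]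
  congr 1
  exact tsum_congr fun n => by rw [← cCoef n]; ring
lemma cA_one_le {y : ℝ} (hy : 0 ≤ y) : 1 ≤ besselG cA y :=
  bessel_one_le cA_bound cA_nonneg (by simp [cA]) hy

lemma cA_pos (y : ℝ) (hy : 0 ≤ y) : 0 < besselG cA y := lt_of_lt_of_le one_pos (cA_one_le hy)

lemma besselI0_eq (x : ℝ) : besselI0 x = besselG cA (x ^ 2 / 4) := by
  rw [besselI0, besselG]
  exact tsum_congr fun n => by rw [cA]; ring

lemma besselI0_hasDerivAt (x : ℝ) :
    HasDerivAt besselI0 (besselG cB (x ^ 2 / 4) * (x / 2)) x := by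
  have hq : HasDerivAt (fun x : ℝ => x ^ 2 / 4) (x / 2) x := by
    have := (hasDerivAt_pow 2 x).div_const 4
    refine this.congr_deriv ?_
    ring
  have h := (bessel_hasDerivAt cA_bound (x ^ 2 / 4)).comp x hq
  rw [cAB] at h
  have heq : besselI0 = besselG cA ∘ fun x : ℝ => x ^ 2 / 4 := funext besselI0_eq
  rw [heq]
  exact h

lemma besselR_eq (t : ℝ) :
    besselR t = t * besselG cB (t ^ 2 / 64) / (8 * besselG cA (t ^ 2 / 64)) := by
  have ha : 0 < besselG cA (t ^ 2 / 64) := cA_pos _ (by positivity)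
  have hd := (besselI0_hasDerivAt (t / 4)).deriv
  rw [besselR, hd, besselI0_eq, show (t/4)^2/4 = t^2/64 by ring]
  field_simp
  ring


noncomputable def besselRho (t : ℝ) : ℝ :=
  ((besselG cB (t^2/64) + t * (besselG cC (t^2/64) * (t/32))) * (8 * besselG cA (t^2/64))
    - t * besselG cB (t^2/64) * (8 * (besselG cB (t^2/64) * (t/32)))) /
    (8 * besselG cA (t^2/64)) ^ 2

lemma besselR_hasDerivAt (t : ℝ) : HasDerivAt besselR (besselRho t) t := by
  have ha : 0 < besselG cA (t ^ 2 / 64) := cA_pos _ (by positivity)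
  have hq : HasDerivAt (fun t : ℝ => t ^ 2 / 64) (t / 32) t := by
    have := (hasDerivAt_pow 2 t).div_const 64
    refine this.congr_deriv ?_
    ring
  have hB : HasDerivAt (fun t : ℝ => besselG cB (t^2/64)) (besselG cC (t^2/64) * (t/32)) t := by
    have h := (bessel_hasDerivAt cB_bound (t^2/64)).comp t hq
    rw [cBC] at h; exact h
  have hA : HasDerivAt (fun t : ℝ => besselG cA (t^2/64)) (besselG cB (t^2/64) * (t/32)) t := by
    have h := (bessel_hasDerivAt cA_bound (t^2/64)).comp t hq
    rw [cAB] at h; exact h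
  have hN : HasDerivAt (fun t : ℝ => t * besselG cB (t^2/64))
      (1 * besselG cB (t^2/64) + t * (besselG cC (t^2/64) * (t/32))) t :=
    (hasDerivAt_id t).mul hB
  have hD : HasDerivAt (fun t : ℝ => 8 * besselG cA (t^2/64))
      (8 * (besselG cB (t^2/64) * (t/32))) t := hA.const_mul 8
  have h := hN.div hD (by positivity)
  have heq : besselR = fun t : ℝ => t * besselG cB (t^2/64) / (8 * besselG cA (t^2/64)) :=
    funext besselR_eq
  rw [heq, besselRho]
  refine h.congr_deriv ?_
  ring

lemma besselR_key (t : ℝ) :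
    t * besselRho t = t / 4 - besselR t - t * besselR t ^ 2 / 4 := by
  have ha : 0 < besselG cA (t ^ 2 / 64) := cA_pos _ (by positivity)
  have hid : besselG cC (t^2/64) * t^2 + 64 * besselG cB (t^2/64)
      - 64 * besselG cA (t^2/64) = 0 := by
    linear_combination 64 * key_identity (t^2/64)
  rw [besselRho, besselR_eq]
  field_simp
  linear_combination (32 * t * besselG cA (t^2/64)) * hid

lemma alg_u₁ (j x τ ρ : ℂ) (hj : j ^ 2 = -1) (hτ : τ ≠ 0) (h1 : j + x ≠ 0) (h2 : j - x ≠ 0)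
    (hρ : τ * ρ = τ / 4 - x - τ * x ^ 2 / 4) :
    (-j * τ) * (j * (-j / 16 * (j + x) ^ 2
        + (-j * τ / 16) * (2 * (j + x) ^ 1 * ρ)))
      = cpvRHSu₁ (1/2) 0 (-j * τ) ((-j * τ / 16) * (j + x) ^ 2)
          (-((-j * τ) / 16) * (j - x) ^ 2) ((j - x) / (j + x)) ((j + x) / (j - x)) := by
  rw [cpvRHSu₁]
  field_simp
  linear_combination ((-16:ℂ)*j*τ + (64:ℂ)*j*τ*ρ + (32:ℂ)*j*x + (16:ℂ)*j*x^2*τ + (32:ℂ)*j^2 + (-16:ℂ)*j^2*x*τ) * hj + ((-64:ℂ)*j) * hρ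

lemma alg_u₂ (j x τ ρ : ℂ) (hj : j ^ 2 = -1) (hτ : τ ≠ 0) (h1 : j + x ≠ 0) (h2 : j - x ≠ 0)
    (hρ : τ * ρ = τ / 4 - x - τ * x ^ 2 / 4) :
    (-j * τ) * (j * (j / 16 * (j - x) ^ 2
        + (-(-j * τ / 16)) * (2 * (j - x) ^ 1 * (-ρ))))
      = cpvRHSu₂ (1/2) 0 (-j * τ) ((-j * τ / 16) * (j + x) ^ 2)
          (-((-j * τ) / 16) * (j - x) ^ 2) ((j - x) / (j + x)) ((j + x) / (j - x)) := by
  rw [cpvRHSu₂]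
  field_simp
  linear_combination ((-16:ℂ)*j*τ + (64:ℂ)*j*τ*ρ + (32:ℂ)*j*x + (16:ℂ)*j*x^2*τ + (-32:ℂ)*j^2 + (16:ℂ)*j^2*x*τ) * hj + ((-64:ℂ)*j) * hρ

lemma alg_v₁ (j x τ ρ : ℂ) (hj : j ^ 2 = -1) (hτ : τ ≠ 0) (h1 : j + x ≠ 0) (h2 : j - x ≠ 0)
    (hρ : τ * ρ = τ / 4 - x - τ * x ^ 2 / 4) :
    (-j * τ) * (j * ((-ρ * (j + x) - (j - x) * ρ) / (j + x) ^ 2))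
      = cpvRHSv₁ (1/2) 0 (-j * τ) ((-j * τ / 16) * (j + x) ^ 2)
          (-((-j * τ) / 16) * (j - x) ^ 2) ((j - x) / (j + x)) ((j + x) / (j - x)) := by
  rw [cpvRHSv₁]
  field_simp
  linear_combination ((-16:ℂ)*j*τ + (64:ℂ)*j*τ*ρ + (32:ℂ)*j*x^2*τ) * hj + ((-64:ℂ)*j) * hρ

lemma alg_v₂ (j x τ ρ : ℂ) (hj : j ^ 2 = -1) (hτ : τ ≠ 0) (h1 : j + x ≠ 0) (h2 : j - x ≠ 0)
    (hρ : τ * ρ = τ / 4 - x - τ * x ^ 2 / 4) :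
    (-j * τ) * (j * ((ρ * (j - x) - (j + x) * -ρ) / (j - x) ^ 2))
      = cpvRHSv₂ (1/2) 0 (-j * τ) ((-j * τ / 16) * (j + x) ^ 2)
          (-((-j * τ) / 16) * (j - x) ^ 2) ((j - x) / (j + x)) ((j + x) / (j - x)) := by
  rw [cpvRHSv₂]
  field_simp
  linear_combination ((16:ℂ)*j*τ + (-64:ℂ)*j*τ*ρ + (-32:ℂ)*j*x^2*τ) * hj + ((64:ℂ)*j) * hρ

lemma alg_H (j x τ : ℂ) (hj : j ^ 2 = -1) (hτ : τ ≠ 0) (h1 : j + x ≠ 0) (h2 : j - x ≠ 0) :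
    cpvSH (1/2) 0 (-j * τ) ((-j * τ / 16) * (j + x) ^ 2)
        (-((-j * τ) / 16) * (j - x) ^ 2) ((j - x) / (j + x)) ((j + x) / (j - x))
      = (-j * τ / 16 + j / 4 * x) * (-j * τ) := by
  rw [cpvSH]
  field_simp
  linear_combination ((-128:ℂ)*j^2*τ + (128:ℂ)*j^2*x^2*τ) * hj

end CPVAux


lemma I_add_ne (x : ℝ) : Complex.I + (x : ℂ) ≠ 0 := by
  intro h
  have := congrArg Complex.im h
  simp at this

lemma I_sub_ne (x : ℝ) : Complex.I - (x : ℂ) ≠ 0 := by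
  intro h
  have := congrArg Complex.im h
  simp at this

lemma besselRc_hasDerivAt (t : ℝ) :
    HasDerivAt (fun τ : ℝ => ((besselR τ : ℝ) : ℂ)) ((besselRho t : ℝ) : ℂ) t :=
  (besselR_hasDerivAt t).ofReal_comp

lemma tc_hasDerivAt (t : ℝ) : HasDerivAt (fun τ : ℝ => ((τ : ℝ) : ℂ)) 1 t :=
  HasDerivAt.ofReal_comp (hasDerivAt_id t)

lemma besselu₁_hasDerivAt (t : ℝ) :
    HasDerivAt besselu₁
      (-Complex.I / 16 * (Complex.I + (besselR t : ℂ)) ^ 2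
        + (-Complex.I * t / 16) * (2 * (Complex.I + (besselR t : ℂ)) ^ 1 * (besselRho t : ℂ))) t := by
  have hf1 : HasDerivAt (fun τ : ℝ => -Complex.I * (τ : ℂ) / 16) (-Complex.I * 1 / 16) t :=
    ((tc_hasDerivAt t).const_mul (-Complex.I)).div_const 16
  have hsq : HasDerivAt (fun τ : ℝ =>
        (Complex.I + ((besselR τ : ℝ) : ℂ)) * (Complex.I + ((besselR τ : ℝ) : ℂ)))
      ((besselRho t : ℂ) * (Complex.I + (besselR t : ℂ))
        + (Complex.I + (besselR t : ℂ)) * (besselRho t : ℂ)) t :=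
    ((besselRc_hasDerivAt t).const_add Complex.I).mul ((besselRc_hasDerivAt t).const_add Complex.I)
  unfold besselu₁
  simp only [pow_two]
  refine (hf1.mul hsq).congr_deriv ?_
  ring

lemma besselu₂_hasDerivAt (t : ℝ) :
    HasDerivAt besselu₂
      (Complex.I / 16 * (Complex.I - (besselR t : ℂ)) ^ 2
        + (-(-Complex.I * t / 16)) * (2 * (Complex.I - (besselR t : ℂ)) ^ 1 * (-(besselRho t : ℂ)))) t := by
  have hf2 : HasDerivAt (fun τ : ℝ => -(-Complex.I * (τ : ℂ) / 16)) (-(-Complex.I * 1 / 16)) t :=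
    (((tc_hasDerivAt t).const_mul (-Complex.I)).div_const 16).neg
  have hsq2 : HasDerivAt (fun τ : ℝ =>
        (Complex.I - ((besselR τ : ℝ) : ℂ)) * (Complex.I - ((besselR τ : ℝ) : ℂ)))
      (-(besselRho t : ℂ) * (Complex.I - (besselR t : ℂ))
        + (Complex.I - (besselR t : ℂ)) * -(besselRho t : ℂ)) t :=
    ((besselRc_hasDerivAt t).const_sub Complex.I).mul ((besselRc_hasDerivAt t).const_sub Complex.I)
  unfold besselu₂
  simp only [pow_two]
  refine (hf2.mul hsq2).congr_deriv ?_
  ring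

lemma besselv₁_hasDerivAt (t : ℝ) :
    HasDerivAt besselv₁
      ((-(besselRho t : ℂ) * (Complex.I + (besselR t : ℂ))
        - (Complex.I - (besselR t : ℂ)) * (besselRho t : ℂ)) / (Complex.I + (besselR t : ℂ)) ^ 2) t :=
  ((besselRc_hasDerivAt t).const_sub Complex.I).div
    ((besselRc_hasDerivAt t).const_add Complex.I) (I_add_ne (besselR t))

lemma besselv₂_hasDerivAt (t : ℝ) :
    HasDerivAt besselv₂
      (((besselRho t : ℂ) * (Complex.I - (besselR t : ℂ))
        - (Complex.I + (besselR t : ℂ)) * (-(besselRho t : ℂ))) / (Complex.I - (besselR t : ℂ)) ^ 2) t :=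
  ((besselRc_hasDerivAt t).const_add Complex.I).div
    ((besselRc_hasDerivAt t).const_sub Complex.I) (I_sub_ne (besselR t))

lemma besselR_keyc (t : ℝ) :
    (t : ℂ) * (besselRho t : ℂ)
      = (t : ℂ) / 4 - (besselR t : ℂ) - (t : ℂ) * (besselR t : ℂ) ^ 2 / 4 := by
  exact_mod_cast congrArg (fun y : ℝ => (y : ℂ)) (besselR_key t)

/-- The special function solution of the coupled Painlevé V system for
`α = 1/2`, `β = 0` on the ray `s = −it`, in terms of the modified Bessel
function `I₀`, together with the explicit Hamiltonian
`H(t) = −it/16 + (i/4)I₀′(t/4)/I₀(t/4)`. -/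
theorem cpv_special_bessel_solution :
    (∀ t : ℝ, 0 < t →
      0 < besselI0 (t / 4) ∧
      Complex.I + (besselR t : ℂ) ≠ 0 ∧
      Complex.I - (besselR t : ℂ) ≠ 0) ∧
    IsCPVSolutionNegIm (1/2) 0 besselu₁ besselu₂ besselv₁ besselv₂ ∧
    ∀ t : ℝ, 0 < t →
      cpvH (1/2) 0 (-Complex.I * t) (besselu₁ t) (besselu₂ t)
          (besselv₁ t) (besselv₂ t)
        = -Complex.I * t / 16 + (Complex.I / 4) * (besselR t : ℂ) := by
  refine ⟨?_, ?_, ?_⟩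
  · intro t ht
    refine ⟨?_, I_add_ne _, I_sub_ne _⟩
    rw [besselI0_eq]
    exact cA_pos _ (by positivity)
  · intro t ht
    have htne : (t : ℂ) ≠ 0 := Complex.ofReal_ne_zero.mpr ht.ne'
    have hkeyc := besselR_keyc t
    refine ⟨(besselu₁_hasDerivAt t).differentiableAt, (besselu₂_hasDerivAt t).differentiableAt,
      (besselv₁_hasDerivAt t).differentiableAt, (besselv₂_hasDerivAt t).differentiableAt,
      ?_, ?_, ?_, ?_⟩
    · rw [(besselu₁_hasDerivAt t).deriv]
      simp only [besselu₁, besselu₂, besselv₁, besselv₂]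
      linear_combination alg_u₁ Complex.I ((besselR t : ℝ) : ℂ) ((t : ℝ) : ℂ)
        ((besselRho t : ℝ) : ℂ) Complex.I_sq htne (I_add_ne _) (I_sub_ne _) hkeyc
    · rw [(besselu₂_hasDerivAt t).deriv]
      simp only [besselu₁, besselu₂, besselv₁, besselv₂]
      linear_combination alg_u₂ Complex.I ((besselR t : ℝ) : ℂ) ((t : ℝ) : ℂ)
        ((besselRho t : ℝ) : ℂ) Complex.I_sq htne (I_add_ne _) (I_sub_ne _) hkeyc
    · rw [(besselv₁_hasDerivAt t).deriv]
      simp only [besselu₁, besselu₂, besselv₁, besselv₂]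
      linear_combination alg_v₁ Complex.I ((besselR t : ℝ) : ℂ) ((t : ℝ) : ℂ)
        ((besselRho t : ℝ) : ℂ) Complex.I_sq htne (I_add_ne _) (I_sub_ne _) hkeyc
    · rw [(besselv₂_hasDerivAt t).deriv]
      simp only [besselu₁, besselu₂, besselv₁, besselv₂]
      linear_combination alg_v₂ Complex.I ((besselR t : ℝ) : ℂ) ((t : ℝ) : ℂ)
        ((besselRho t : ℝ) : ℂ) Complex.I_sq htne (I_add_ne _) (I_sub_ne _) hkeyc
  · intro t ht
    have htne : (t : ℂ) ≠ 0 := Complex.ofReal_ne_zero.mpr ht.ne'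
    have hsne : -Complex.I * (t : ℂ) ≠ 0 := mul_ne_zero (neg_ne_zero.mpr Complex.I_ne_zero) htne
    rw [cpvH, div_eq_iff hsne]
    simp only [besselu₁, besselu₂, besselv₁, besselv₂]
    linear_combination alg_H Complex.I ((besselR t : ℝ) : ℂ) ((t : ℝ) : ℂ)
      Complex.I_sq htne (I_add_ne _) (I_sub_ne _)
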